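/- Let σ(t) = 1/(1 + exp(−t)) and φ(u) = exp(−u²/2)/√(2π). For all x ∈ ℝ, all a ∈ ℝ and all y ∈ {−1, 1}: (σ(2a)·φ(x − a − 1) + σ(−2a)·φ(x − a + 1))·σ(2·x·y) = σ(2·a·y)·φ(x − a − y). -/

import Mathlib

open Real

/-- The logistic sigmoid `σ(t) = 1 / (1 + exp (-t))`. -/
noncomputable def sigmoid (t : ℝ) : ℝ := 1 / (1 + Real.exp (-t))

/-- The standard Gaussian density `φ(u) = exp (-u² / 2) / √(2π)`. -/
noncomputable def gaussPdf (u : ℝ) : ℝ :=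
  Real.exp (-u ^ 2 / 2) / Real.sqrt (2 * Real.pi)

/-- **Density identity in the proof of Theorem 1.** The joint density of
`(X₁, Y)` given `A = a` in the left causal model (mixture of Gaussians for
`X₁`, then `Y = y` with probability `σ(2x₁y)`) equals the joint density of
`(X₁, Y)` given `A = a` in the right causal model (`Y = y` with probability
`σ(2ay)`, `X₂ ~ N(y, 1)`, `X₁ = A + X₂`). -/
theorem density_identity (x a : ℝ) (y : ℝ) (hy : y = -1 ∨ y = 1) :
    (_root_.sigmoid (2 * a) * gaussPdf (x - a - 1) + _root_.sigmoid (-(2 * a)) * gaussPdf (x - a + 1)) *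
        _root_.sigmoid (2 * x * y) =
      _root_.sigmoid (2 * a * y) * gaussPdf (x - a - y) := by
  have hs : Real.sqrt (2 * Real.pi) ≠ 0 :=
    ne_of_gt (Real.sqrt_pos.mpr (by positivity))
  have key : Real.exp (-(x - a - 1) ^ 2 / 2)
      = Real.exp (-(x - a + 1) ^ 2 / 2) * (Real.exp (2 * x) * (Real.exp (2 * a))⁻¹) := by
    rw [← Real.exp_neg, ← Real.exp_add, ← Real.exp_add]; ring_nf
  have hA : Real.exp (2 * a) ≠ 0 := Real.exp_ne_zero _
  have hX : Real.exp (2 * x) ≠ 0 := Real.exp_ne_zero _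
  have hA1 : Real.exp (2 * a) + 1 ≠ 0 := by positivity
  have hX1 : Real.exp (2 * x) + 1 ≠ 0 := by positivity
  rcases hy with rfl | rfl <;>
  · unfold _root_.sigmoid gaussPdf
    rw [key]
    simp only [neg_neg, mul_one, mul_neg_one, neg_neg, Real.exp_neg]
    field_simp
    ring
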